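/- arXiv:2010.08818 — 2 statements merged into one kernel-verified Lean document; each statement's English description precedes it below -/
import Mathlib

section
/- For u < 0 and real s < t, (1/π) ∫_{-∞}^{∞} e^{i(s-t)v}/(u + iv) dv = -2 e^{u(t-s)}; and for u > 0 and s > t, (1/π) ∫_{-∞}^{∞} e^{i(s-t)v}/(u + iv) dv = 2 e^{u(t-s)}; in all other cases with u ≠ 0 the integral is 0 (for s ≠ t). -/
open Complex Filter

open MeasureTheory Real Set intervalIntegral
open scoped FourierTransform Topology

noncomputable section
namespace FCK


lemma denom_ne (u : ℝ) (hu : u ≠ 0) (v : ℝ) : (u : ℂ) + Complex.I * v ≠ 0 := by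
  intro h
  have h1 : ((u:ℂ) + Complex.I * v).re = 0 := by rw [h]; simp
  simp [Complex.add_re, Complex.mul_re] at h1
  exact hu h1

lemma integrableOn_xexp {c : ℂ} (hc : 0 < c.re) :
    IntegrableOn (fun x : ℝ => (x : ℂ) * Complex.exp (-(c * x))) (Ioi (0:ℝ)) := by
  have hreal : IntegrableOn (fun x : ℝ => x * Real.exp (-c.re * x)) (Ioi (0:ℝ)) := by
    apply integrable_of_isBigO_exp_neg (b := c.re / 2) (by linarith) (by fun_prop)
    apply Asymptotics.IsLittleO.isBigO
    apply Asymptotics.isLittleO_of_tendsto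
    · intro x hx
      exact absurd hx (Real.exp_ne_zero _)
    · have h0 : Tendsto (fun x : ℝ => x * Real.exp (-(c.re/2) * x)) atTop (𝓝 0) := by
        have := tendsto_rpow_mul_exp_neg_mul_atTop_nhds_zero 1 (c.re/2) (by linarith)
        apply this.congr'
        filter_upwards [eventually_gt_atTop (0:ℝ)] with x hx
        rw [Real.rpow_one]
      apply h0.congr
      intro x
      rw [eq_div_iff (Real.exp_ne_zero _), mul_assoc, ← Real.exp_add]
      ring_nf
  apply Integrable.mono' hreal
  · apply Continuous.aestronglyMeasurable
    fun_prop
  · filter_upwards [ae_restrict_mem measurableSet_Ioi] with x (hx : (0:ℝ) < x)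
    rw [norm_mul, Complex.norm_exp]
    simp only [Complex.norm_real, Real.norm_eq_abs, abs_of_pos hx]
    have : (-(c * x)).re = -c.re * x := by simp [Complex.neg_re, Complex.mul_re]
    rw [this]

lemma half_line {c : ℂ} (hc : 0 < c.re) :
    ∫ x in Ioi (0:ℝ), (x : ℂ) * Complex.exp (-(c * x)) = 1 / c ^ 2 := by
  have hc0 : c ≠ 0 := by
    intro h; rw [h] at hc; simp at hc
  set F : ℝ → ℂ := fun x => -((x : ℂ) / c + 1 / c ^ 2) * Complex.exp (-(c * x)) with hF
  have hderiv : ∀ x : ℝ, HasDerivAt F ((x : ℂ) * Complex.exp (-(c * x))) x := by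
    intro x
    have hA : HasDerivAt (fun z : ℂ => -(z / c + 1 / c ^ 2)) (-(1 / c)) (x : ℂ) :=
      (((hasDerivAt_id (x:ℂ)).div_const c).add_const (1 / c ^ 2)).neg
    have hB : HasDerivAt (fun z : ℂ => Complex.exp (-(c * z)))
        (Complex.exp (-(c * (x:ℂ))) * -c) (x : ℂ) := by
      have : HasDerivAt (fun z : ℂ => -(c * z)) (-c) (x : ℂ) := by
        have h := ((hasDerivAt_id (x:ℂ)).const_mul c).neg
        rw [mul_one] at h
        exact h
      exact this.cexp
    have := (hA.mul hB).comp_ofReal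
    convert this using 1
    · rfl
    field_simp
    ring
  have htend : Tendsto F atTop (𝓝 0) := by
    apply squeeze_zero_norm' (a := fun x : ℝ =>
      (x * ‖(1:ℂ)/c‖ + ‖(1:ℂ)/c^2‖) * Real.exp (-c.re * x))
    · filter_upwards [eventually_ge_atTop (0:ℝ)] with x hx
      rw [hF]
      simp only [norm_mul, norm_neg]
      have he : ‖Complex.exp (-(c * x))‖ = Real.exp (-c.re * x) := by
        rw [Complex.norm_exp]
        congr 1
        simp [Complex.neg_re, Complex.mul_re]
      rw [he]
      gcongr
      refine (norm_add_le _ _).trans ?_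
      gcongr
      rw [div_eq_mul_inv, one_div, norm_mul, Complex.norm_real, Real.norm_eq_abs,
        _root_.abs_of_nonneg hx, norm_inv]
    · have h1 : Tendsto (fun x : ℝ => x * Real.exp (-c.re * x)) atTop (𝓝 0) := by
        have := tendsto_rpow_mul_exp_neg_mul_atTop_nhds_zero 1 c.re hc
        apply this.congr'
        filter_upwards [eventually_gt_atTop (0:ℝ)] with x hx
        rw [Real.rpow_one]
      have h2 : Tendsto (fun x : ℝ => Real.exp (-c.re * x)) atTop (𝓝 0) :=
        Real.tendsto_exp_atBot.comp (tendsto_id.const_mul_atTop_of_neg (by linarith))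
      have := ((h1.const_mul ‖(1:ℂ)/c‖).add (h2.const_mul ‖(1:ℂ)/c^2‖))
      apply Tendsto.congr _ (by simpa using this)
      intro x
      simp only [norm_inv, norm_pow, one_div]
      ring
  have key := integral_Ioi_of_hasDerivAt_of_tendsto' (a := 0)
    (fun x _ => hderiv x) (integrableOn_xexp hc) htend
  rw [key, hF]
  simp



lemma denom_ne' (u b : ℝ) (hu : u ≠ 0) : (u : ℂ) + (b : ℂ) * Complex.I ≠ 0 := by
  intro h
  have h1 : ((u:ℂ) + (b:ℂ) * Complex.I).re = 0 := by rw [h]; simp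
  simp at h1
  exact hu h1

lemma integrable_sq_gen (u k : ℝ) (hu : u ≠ 0) (hk : k ≠ 0) (φ : ℝ → ℂ)
    (hφm : Continuous φ) (hφ : ∀ v, ‖φ v‖ = 1) :
    Integrable (fun v : ℝ => φ v / ((u:ℂ) + ((k * v : ℝ) : ℂ) * Complex.I) ^ 2) := by
  set m : ℝ := min (u ^ 2) (k ^ 2) with hm
  have hm0 : 0 < m := lt_min (by positivity) (by positivity)
  have hne : ∀ v : ℝ, ((u:ℂ) + ((k * v : ℝ) : ℂ) * Complex.I) ≠ 0 := fun v =>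
    denom_ne' u (k * v) hu
  apply Integrable.mono' ((integrable_inv_one_add_sq).const_mul m⁻¹)
  · exact (hφm.div (by fun_prop) (fun v => pow_ne_zero 2 (hne v))).aestronglyMeasurable
  · filter_upwards with v
    rw [norm_div, hφ, norm_pow]
    have hcalc : ‖(u:ℂ) + ((k * v : ℝ) : ℂ) * Complex.I‖ ^ 2 = u ^ 2 + (k * v) ^ 2 := by
      rw [Complex.sq_norm, Complex.normSq_add_mul_I]
    rw [hcalc]
    rw [div_le_iff₀ (by positivity), mul_comm, ← mul_assoc, mul_assoc, ← mul_inv,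
      ← div_eq_mul_inv, le_div_iff₀ (by positivity), one_mul]
    rcases le_total (u ^ 2) (k ^ 2) with h | h
    · have : m = u ^ 2 := min_eq_left h
      nlinarith [sq_nonneg v]
    · have : m = k ^ 2 := min_eq_right h
      nlinarith [sq_nonneg v]



-- assume previous lemmas compiled; restate as axioms for speed of iteration

lemma fourier_compute {u : ℝ} (hu : 0 < u) {a : ℝ} (ha : a ≠ 0) :
    ∫ v : ℝ, Complex.exp (Complex.I * a * v) / ((u:ℂ) + Complex.I * v) ^ 2
      = 2 * (π : ℂ) * (if 0 < a then (a : ℂ) * Real.exp (-u * a) else 0) := by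
  set g : ℝ → ℂ := fun x => (x:ℂ) * Complex.exp (-((u:ℂ) * x)) with hg
  set f : ℝ → ℂ := (Ioi (0:ℝ)).indicator g with hf'
  have hre : ((u : ℂ)).re = u := by simp
  have hf : Integrable f :=
    (integrableOn_xexp (c := (u:ℂ)) (by simpa using hu)).integrable_indicator measurableSet_Ioi
  have hF : ∀ w : ℝ, 𝓕 f w = 1 / ((u:ℂ) + ((2*π*w : ℝ):ℂ) * Complex.I) ^ 2 := by
    intro w
    rw [Real.fourier_real_eq_integral_exp_smul]
    have hpt : ∀ v : ℝ, Complex.exp (↑(-2*π*v*w) * Complex.I) • f v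
        = (Ioi (0:ℝ)).indicator
          (fun v : ℝ => (v:ℂ) * Complex.exp (-(((u:ℂ) + ((2*π*w:ℝ):ℂ)*Complex.I) * v))) v := by
      intro v
      by_cases hv : v ∈ Ioi (0:ℝ)
      · rw [indicator_of_mem hv, hf', indicator_of_mem hv, hg, smul_eq_mul]
        rw [mul_comm, mul_assoc, ← Complex.exp_add]
        congr 2
        push_cast
        ring
      · rw [indicator_of_notMem hv, hf', indicator_of_notMem hv, smul_zero]
    rw [integral_congr_ae (Filter.Eventually.of_forall hpt),
      MeasureTheory.integral_indicator measurableSet_Ioi,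
      half_line (c := (u:ℂ) + ((2*π*w:ℝ):ℂ) * Complex.I) (by simpa using hu)]
  have h'f : Integrable (𝓕 f) := by
    apply (integrable_sq_gen u (2*π) hu.ne' (by positivity) (fun _ => 1) continuous_const
      (fun v => norm_one)).congr
    filter_upwards with w
    rw [hF w]
  have hcont : ContinuousAt f a := by
    rcases ha.lt_or_gt with h | h
    · have hev : (fun _ : ℝ => (0:ℂ)) =ᶠ[𝓝 a] f := by
        filter_upwards [Iio_mem_nhds h] with x (hx : x < 0)
        rw [hf', indicator_of_notMem (by simp; linarith)]
      exact continuousAt_const.congr hev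
    · have hev : g =ᶠ[𝓝 a] f := by
        filter_upwards [Ioi_mem_nhds h] with x (hx : 0 < x)
        rw [hf', indicator_of_mem (by exact hx)]
      exact ((by fun_prop : Continuous g).continuousAt).congr hev
  have hinv := hf.fourierInv_fourier_eq h'f hcont
  rw [Real.fourierInv_eq'] at hinv
  -- now hinv : ∫ w, cexp (↑(2π⟪w,a⟫)*I) • 𝓕 f w = f a
  simp only [RCLike.inner_apply, conj_trivial] at hinv
  have hGsub := MeasureTheory.Measure.integral_comp_mul_left
    (fun v : ℝ => Complex.exp (Complex.I * a * v) / ((u:ℂ) + Complex.I * v) ^ 2) (2*π)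
  have heq : ∀ x : ℝ,
      Complex.exp (Complex.I * a * ((2*π*x : ℝ):ℂ)) / ((u:ℂ) + Complex.I * ((2*π*x:ℝ):ℂ)) ^ 2
        = Complex.exp (((2 * π * (x * a) : ℝ):ℂ) * Complex.I) • 𝓕 f x := by
    intro x
    rw [hF x, smul_eq_mul, mul_one_div]
    congr 2
    · push_cast; ring
    · push_cast; ring
  simp only [heq] at hGsub
  simp only [mul_comm a] at hinv
  rw [hinv] at hGsub
  have h2π : |(2*π)⁻¹| = (2*π)⁻¹ := abs_of_pos (by positivity)
  rw [h2π] at hGsub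
  have hfin : (∫ v : ℝ, Complex.exp (Complex.I * a * v) / ((u:ℂ) + Complex.I * v) ^ 2)
      = ((2*π:ℝ):ℂ) * f a := by
    rw [hGsub, real_smul, ← mul_assoc, ← Complex.ofReal_mul,
      mul_inv_cancel₀ (by positivity : (2*π:ℝ) ≠ 0), Complex.ofReal_one, one_mul]
  rw [hfin, hf']
  rcases ha.lt_or_gt with h | h
  · rw [indicator_of_notMem (by simp; linarith), if_neg (by linarith)]
    simp
  · rw [indicator_of_mem (by exact h : a ∈ Ioi (0:ℝ)), if_pos h, hg]
    push_cast [Complex.ofReal_exp]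
    ring




lemma norm_exp_Iav (a v : ℝ) : ‖Complex.exp (Complex.I * a * v)‖ = 1 := by
  rw [Complex.norm_exp]
  have : (Complex.I * a * v).re = 0 := by simp [Complex.mul_re, Complex.mul_im]
  rw [this, Real.exp_zero]

lemma deriv_algebra (A e d : ℂ) (hd : d ≠ 0) :
    A * (e / d) - Complex.I * (e / d ^ 2) = (e * A * d - e * Complex.I) / d ^ 2 := by
  field_simp

lemma tendsto_main_pos {u : ℝ} (hu : 0 < u) {a : ℝ} (ha : a ≠ 0) :
    Tendsto (fun R : ℝ => ∫ v in (-R)..R,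
        Complex.exp (Complex.I * a * v) / ((u:ℂ) + Complex.I * v)) atTop
      (𝓝 (((if 0 < a then 2 * π * Real.exp (-u * a) else 0 : ℝ)) : ℂ)) := by
  have hne : ∀ v : ℝ, (u:ℂ) + Complex.I * v ≠ 0 := denom_ne u hu.ne'
  set M : ℝ → ℂ := fun v => Complex.exp (Complex.I * a * v) / ((u:ℂ) + Complex.I * v) with hM
  set S : ℝ → ℂ := fun v => Complex.exp (Complex.I * a * v) / ((u:ℂ) + Complex.I * v) ^ 2 with hS
  set G : ℝ → ℂ := fun v => Complex.exp (Complex.I * a * v) / ((u:ℂ) + Complex.I * v) with hG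
  have hcontM : Continuous M := by
    apply Continuous.div (by fun_prop) (by fun_prop) hne
  have hcontS : Continuous S := by
    apply Continuous.div (by fun_prop) (by fun_prop) (fun v => pow_ne_zero 2 (hne v))
  have hderiv : ∀ v : ℝ, HasDerivAt G (Complex.I * a * M v - Complex.I * S v) v := by
    intro v
    have hc : HasDerivAt (fun z : ℂ => Complex.exp (Complex.I * a * z))
        (Complex.exp (Complex.I * a * v) * (Complex.I * a)) (v : ℂ) := by
      simpa using ((hasDerivAt_id (v:ℂ)).const_mul (Complex.I * a)).cexp
    have hd : HasDerivAt (fun z : ℂ => (u:ℂ) + Complex.I * z) Complex.I (v : ℂ) := by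
      simpa using ((hasDerivAt_id (v:ℂ)).const_mul Complex.I).const_add (u:ℂ)
    have := ((hc.div hd (hne v)).comp_ofReal)
    convert this using 1
    · rfl
    exact deriv_algebra (Complex.I * a) (Complex.exp (Complex.I * a * v))
      ((u:ℂ) + Complex.I * v) (hne v)
  have hkey : ∀ R : ℝ, ∫ v in (-R)..R, M v
      = (Complex.I * a)⁻¹ * ((G R - G (-R)) + Complex.I * ∫ v in (-R)..R, S v) := by
    intro R
    have hIM : IntervalIntegrable M volume (-R) R := hcontM.intervalIntegrable _ _
    have hIS : IntervalIntegrable S volume (-R) R := hcontS.intervalIntegrable _ _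
    have hftc : ∫ v in (-R)..R, (Complex.I * a * M v - Complex.I * S v)
        = G R - G (-R) :=
      intervalIntegral.integral_eq_sub_of_hasDerivAt (fun x _ => hderiv x)
        ((((continuous_const.mul hcontM)).sub ((continuous_const.mul hcontS))).intervalIntegrable _ _)
    rw [intervalIntegral.integral_sub (hIM.const_mul _) (hIS.const_mul _),
      intervalIntegral.integral_const_mul, intervalIntegral.integral_const_mul] at hftc
    have hIa : Complex.I * a ≠ 0 :=
      mul_ne_zero Complex.I_ne_zero (Complex.ofReal_ne_zero.mpr ha)
    rw [eq_inv_mul_iff_mul_eq₀ hIa]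
    linear_combination hftc
  have hIa : Complex.I * (a:ℂ) ≠ 0 :=
    mul_ne_zero Complex.I_ne_zero (Complex.ofReal_ne_zero.mpr ha)
  have hSint : Integrable S := by
    apply (integrable_sq_gen u 1 hu.ne' one_ne_zero
      (fun v => Complex.exp (Complex.I * a * v)) (by fun_prop) (norm_exp_Iav a)).congr
    filter_upwards with v
    rw [hS]
    norm_num [mul_comm]
  have hStend : Tendsto (fun R : ℝ => ∫ v in (-R)..R, S v) atTop (𝓝 (∫ v : ℝ, S v)) :=
    intervalIntegral_tendsto_integral hSint tendsto_neg_atTop_atBot tendsto_id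
  have hGbound : ∀ w : ℝ, w ≠ 0 → ‖G w‖ ≤ 1 / |w| := by
    intro w hw
    rw [hG]
    simp only [norm_div, norm_exp_Iav]
    apply one_div_le_one_div_of_le (abs_pos.mpr hw)
    calc |w| = |((u:ℂ) + Complex.I * w).im| := by simp
      _ ≤ ‖(u:ℂ) + Complex.I * w‖ := Complex.abs_im_le_norm _
      _ = ‖(u:ℂ) + Complex.I * w‖ := rfl
  have hBtend : Tendsto (fun R : ℝ => G R - G (-R)) atTop (𝓝 0) := by
    apply squeeze_zero_norm' (a := fun R : ℝ => 2 / R)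
    · filter_upwards [eventually_gt_atTop (0:ℝ)] with R hR
      calc ‖G R - G (-R)‖ ≤ ‖G R‖ + ‖G (-R)‖ := norm_sub_le _ _
        _ ≤ 1 / |R| + 1 / |(-R)| := add_le_add
            (hGbound R hR.ne') (hGbound (-R) (by linarith))
        _ = 2 / R := by rw [abs_neg, abs_of_pos hR]; ring
    · have := tendsto_inv_atTop_zero (𝕜 := ℝ)
      simpa [div_eq_mul_inv] using this.const_mul (2:ℝ)
  have hlim : Tendsto (fun R : ℝ =>
      (Complex.I * (a:ℂ))⁻¹ * ((G R - G (-R)) + Complex.I * ∫ v in (-R)..R, S v)) atTop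
      (𝓝 ((Complex.I * (a:ℂ))⁻¹ * (0 + Complex.I * ∫ v : ℝ, S v))) :=
    (hBtend.add (hStend.const_mul Complex.I)).const_mul _
  have hval : (Complex.I * (a:ℂ))⁻¹ * (0 + Complex.I * ∫ v : ℝ, S v)
      = (((if 0 < a then 2 * π * Real.exp (-u * a) else 0 : ℝ)) : ℂ) := by
    have : (∫ v : ℝ, S v) = 2 * (π : ℂ) * (if 0 < a then (a : ℂ) * Real.exp (-u * a) else 0) :=
      fourier_compute hu ha
    rw [this, zero_add]
    by_cases h : 0 < a
    · rw [if_pos h, if_pos h]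
      push_cast
      field_simp
      ring
      exact mul_inv_cancel₀ (Complex.ofReal_ne_zero.mpr ha)
    · rw [if_neg h, if_neg h]
      simp
  rw [hval] at hlim
  exact hlim.congr (fun R => (hkey R).symm)


lemma intervalIntegral_conj (g : ℝ → ℂ) (x y : ℝ) :
    ∫ v in x..y, (starRingEnd ℂ) (g v) = (starRingEnd ℂ) (∫ v in x..y, g v) := by
  simp only [intervalIntegral.intervalIntegral_eq_integral_uIoc]
  split_ifs <;> simp [integral_conj]

end FCK

/-- The principal-value Fourier integral `(1/π) ∫_ℝ e^{i(s-t)v}/(u+iv) dv` equals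
    `-2 e^{u(t-s)}` if `u < 0` and `s < t`, equals `2 e^{u(t-s)}` if `u > 0` and `t < s`,
    and equals `0` in the remaining cases with `u ≠ 0`, `s ≠ t`. -/
theorem fourier_cauchy_kernel (u s t : ℝ) (hu : u ≠ 0) (hst : s ≠ t) :
    Tendsto
      (fun R : ℝ => (1 / (Real.pi : ℂ)) *
        ∫ v in (-R)..R, Complex.exp (Complex.I * ((s : ℂ) - t) * v) / ((u : ℂ) + Complex.I * v))
      atTop
      (nhds (if u < 0 ∧ s < t then (-2 * Real.exp (u * (t - s)) : ℂ)
        else if 0 < u ∧ t < s then (2 * Real.exp (u * (t - s)) : ℂ) else 0)) := by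
  have hπ : (Real.pi : ℂ) ≠ 0 := Complex.ofReal_ne_zero.mpr Real.pi_ne_zero
  rcases hu.lt_or_gt with hneg | hpos
  · -- u < 0 : use symmetry from the positive case with -u, t - s
    have ha' : t - s ≠ 0 := sub_ne_zero.mpr (Ne.symm hst)
    have hΨ := FCK.tendsto_main_pos (u := -u) (by linarith) ha'
    have h2 : Tendsto (fun R : ℝ =>
        -((starRingEnd ℂ) (∫ v in (-R)..R,
          Complex.exp (Complex.I * ((t - s : ℝ) : ℂ) * v) / (((-u : ℝ) : ℂ) + Complex.I * v))))
        atTop (𝓝 (-((starRingEnd ℂ)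
          (((if 0 < t - s then 2 * π * Real.exp (-(-u) * (t - s)) else 0 : ℝ)) : ℂ)))) :=
      ((continuous_star.tendsto _).comp hΨ).neg
    have hpt : ∀ v : ℝ, -((starRingEnd ℂ)
        (Complex.exp (Complex.I * ((t - s : ℝ) : ℂ) * v) / (((-u : ℝ) : ℂ) + Complex.I * v)))
        = Complex.exp (Complex.I * ((s : ℂ) - t) * v) / ((u : ℂ) + Complex.I * v) := by
      intro v
      have h1 : (starRingEnd ℂ) (Complex.exp (Complex.I * ((t - s : ℝ) : ℂ) * v))
          = Complex.exp (Complex.I * ((s : ℂ) - t) * v) := by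
        rw [← Complex.exp_conj]
        congr 1
        simp only [map_mul, Complex.conj_I, Complex.conj_ofReal]
        push_cast
        ring
      have h2 : (starRingEnd ℂ) (((-u : ℝ) : ℂ) + Complex.I * v)
          = -(((u : ℝ) : ℂ) + Complex.I * v) := by
        simp only [map_add, map_mul, Complex.conj_I, Complex.conj_ofReal]
        push_cast
        ring
      rw [map_div₀, h1, h2, div_neg, neg_neg]
    have h3 : Tendsto (fun R : ℝ => (1 / (Real.pi : ℂ)) *
        ∫ v in (-R)..R, Complex.exp (Complex.I * ((s : ℂ) - t) * v) / ((u : ℂ) + Complex.I * v))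
        atTop (𝓝 ((1 / (Real.pi : ℂ)) * (-((starRingEnd ℂ)
          (((if 0 < t - s then 2 * π * Real.exp (-(-u) * (t - s)) else 0 : ℝ)) : ℂ))))) := by
      apply (h2.const_mul _).congr
      intro R
      congr 1
      rw [← FCK.intervalIntegral_conj, ← intervalIntegral.integral_neg]
      exact intervalIntegral.integral_congr (fun v _ => (hpt v))
    have hval : ((1 / (Real.pi : ℂ)) * (-((starRingEnd ℂ)
          (((if 0 < t - s then 2 * π * Real.exp (-(-u) * (t - s)) else 0 : ℝ)) : ℂ))))
        = (if u < 0 ∧ s < t then (-2 * Real.exp (u * (t - s)) : ℂ)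
          else if 0 < u ∧ t < s then (2 * Real.exp (u * (t - s)) : ℂ) else 0) := by
      rw [Complex.conj_ofReal]
      have harg : -(-u) * (t - s) = u * (t - s) := by ring
      rw [harg]
      rcases ha'.lt_or_gt with h | h
      · rw [if_neg (not_lt.mpr h.le), if_neg (by rintro ⟨_, h2⟩; linarith),
          if_neg (by rintro ⟨h1, _⟩; linarith)]
        simp
      · rw [if_pos h, if_pos ⟨hneg, by linarith⟩]
        push_cast
        field_simp
    rw [← hval]
    exact h3
  · -- 0 < u
    have ha : s - t ≠ 0 := sub_ne_zero.mpr hst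
    have h := FCK.tendsto_main_pos (u := u) hpos ha
    have h3 : Tendsto (fun R : ℝ => (1 / (Real.pi : ℂ)) *
        ∫ v in (-R)..R, Complex.exp (Complex.I * ((s : ℂ) - t) * v) / ((u : ℂ) + Complex.I * v))
        atTop (𝓝 ((1 / (Real.pi : ℂ)) *
          (((if 0 < s - t then 2 * π * Real.exp (-u * (s - t)) else 0 : ℝ)) : ℂ))) := by
      apply (h.const_mul _).congr
      intro R
      congr 1
      apply intervalIntegral.integral_congr
      intro v _
      norm_cast
    have hval : ((1 / (Real.pi : ℂ)) *
          (((if 0 < s - t then 2 * π * Real.exp (-u * (s - t)) else 0 : ℝ)) : ℂ))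
        = (if u < 0 ∧ s < t then (-2 * Real.exp (u * (t - s)) : ℂ)
          else if 0 < u ∧ t < s then (2 * Real.exp (u * (t - s)) : ℂ) else 0) := by
      have harg : -u * (s - t) = u * (t - s) := by ring
      rw [harg]
      rcases ha.lt_or_gt with hlt | hlt
      · rw [if_neg (not_lt.mpr hlt.le), if_neg (by rintro ⟨h1, _⟩; linarith),
          if_neg (by rintro ⟨_, h2⟩; linarith)]
        simp
      · rw [if_pos hlt, if_neg (by rintro ⟨h1, _⟩; linarith), if_pos ⟨hpos, by linarith⟩]
        push_cast
        field_simp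
    rw [← hval]
    exact h3
end
end

section
/- Suppose f : (0,∞) → [0,∞) is Borel measurable, and there exists a constant c such that for almost every t with f(t) ≠ 0, ∫₀^t f(s) s^{-(α+1)} Γ(α+1) ds = t + c. Then f(t) = Γ(α+1)^{-1} t^{α+1} · 1_E(t) almost everywhere for some measurable E ⊆ (0,∞), and E is (up to null sets) connected, i.e., an interval. -/
open MeasureTheory
open Set

private lemma ward_aux_Ioc (μ : Measure ℝ) (A : Set ℝ)
    (hA0 : A ⊆ Set.Ioi 0)
    (hatom : ∀ x : ℝ, μ {x} = 0)
    (hout : ∀ u v : ℝ, 0 < u → (∀ a ∈ A, a ∉ Set.Ioo u v) → μ (Set.Ioo u v) = 0)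
    (hval : ∀ p ∈ A, ∀ q ∈ A, p ≤ q → μ (Set.Ioc p q) = ENNReal.ofReal (q - p)) :
    ∀ p ∈ A, ∀ q ∈ A, ∀ x : ℝ, p ≤ x → x ≤ q → μ (Set.Ioc p x) = ENNReal.ofReal (x - p) := by
  intro p hp q hq x hpx hxq
  set C := A ∩ Icc p x with hC
  set D := A ∩ Icc x q with hD
  have hCne : C.Nonempty := ⟨p, hp, le_rfl, hpx⟩
  have hDne : D.Nonempty := ⟨q, hq, hxq, le_rfl⟩
  have hCbdd : BddAbove C := ⟨x, fun a ha => ha.2.2⟩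
  have hDbdd : BddBelow D := ⟨x, fun a ha => ha.2.1⟩
  set u := sSup C with hu
  set v := sInf D with hv
  have hpu : p ≤ u := le_csSup hCbdd ⟨hp, le_rfl, hpx⟩
  have hux : u ≤ x := csSup_le hCne fun a ha => ha.2.2
  have hxv : x ≤ v := le_csInf hDne fun a ha => ha.2.1
  have hvq : v ≤ q := csInf_le hDbdd ⟨hq, hxq, le_rfl⟩
  have hu0 : 0 < u := lt_of_lt_of_le (hA0 hp) hpu
  obtain ⟨a, hamono, hatend, hamem⟩ := exists_seq_tendsto_sSup hCne hCbdd
  obtain ⟨b, hbanti, hbtend, hbmem⟩ := exists_seq_tendsto_sInf hDne hDbdd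
  rw [← hu] at hatend
  rw [← hv] at hbtend
  -- μ (Ioc p u) = ofReal (u - p)
  have haleu : ∀ n, a n ≤ u := fun n => le_csSup hCbdd (hamem n)
  have hbgev : ∀ n, v ≤ b n := fun n => csInf_le hDbdd (hbmem n)
  have hIocpu : μ (Ioc p u) = ENNReal.ofReal (u - p) := by
    apply le_antisymm
    · have h1 : Ioc p u ⊆ Ioo p u ∪ {u} := by
        intro y ⟨hy1, hy2⟩
        rcases eq_or_lt_of_le hy2 with h | h
        · exact Or.inr h
        · exact Or.inl ⟨hy1, h⟩
      have h2 : Ioo p u ⊆ ⋃ n, Ioc p (a n) := by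
        intro y ⟨hy1, hy2⟩
        obtain ⟨n, hn⟩ := ((tendsto_order.1 hatend).1 y hy2).exists
        exact mem_iUnion.2 ⟨n, hy1, hn.le⟩
      calc μ (Ioc p u) ≤ μ (Ioo p u ∪ {u}) := measure_mono h1
        _ ≤ μ (Ioo p u) + μ {u} := measure_union_le _ _
        _ = μ (Ioo p u) := by rw [hatom, add_zero]
        _ ≤ μ (⋃ n, Ioc p (a n)) := measure_mono h2
        _ = ⨆ n, μ (Ioc p (a n)) :=
            Directed.measure_iUnion ((show Monotone fun n => Ioc p (a n) from fun m n hmn =>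
              Ioc_subset_Ioc le_rfl (hamono hmn)).directed_le)
        _ ≤ ENNReal.ofReal (u - p) := by
            apply iSup_le
            intro n
            rw [hval p hp (a n) (hamem n).1 (hamem n).2.1]
            exact ENNReal.ofReal_le_ofReal (by linarith [haleu n])
    · have : ∀ n, ENNReal.ofReal (a n - p) ≤ μ (Ioc p u) := by
        intro n
        rw [← hval p hp (a n) (hamem n).1 (hamem n).2.1]
        exact measure_mono (Ioc_subset_Ioc le_rfl (haleu n))
      refine le_of_tendsto' (ENNReal.tendsto_ofReal (hatend.sub_const p)) this
  have hIocvq : μ (Ioc v q) = ENNReal.ofReal (q - v) := by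
    apply le_antisymm
    · have h2 : Ioc v q ⊆ ⋃ n, Ioc (b n) q := by
        intro y ⟨hy1, hy2⟩
        obtain ⟨n, hn⟩ := ((tendsto_order.1 hbtend).2 y hy1).exists
        exact mem_iUnion.2 ⟨n, hn, hy2⟩
      calc μ (Ioc v q) ≤ μ (⋃ n, Ioc (b n) q) := measure_mono h2
        _ = ⨆ n, μ (Ioc (b n) q) :=
            Directed.measure_iUnion ((show Monotone fun n => Ioc (b n) q from fun m n hmn =>
              Ioc_subset_Ioc (hbanti hmn) le_rfl).directed_le)
        _ ≤ ENNReal.ofReal (q - v) := by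
            apply iSup_le
            intro n
            rw [hval (b n) (hbmem n).1 q hq (hbmem n).2.2]
            exact ENNReal.ofReal_le_ofReal (by linarith [hbgev n])
    · have : ∀ n, ENNReal.ofReal (q - b n) ≤ μ (Ioc v q) := by
        intro n
        rw [← hval (b n) (hbmem n).1 q hq (hbmem n).2.2]
        exact measure_mono (Ioc_subset_Ioc (hbgev n) le_rfl)
      refine le_of_tendsto' (ENNReal.tendsto_ofReal ((tendsto_const_nhds.sub hbtend))) this
  -- gap has measure zero
  have hgap : μ (Ioo u v) = 0 := by
    apply hout u v hu0
    intro s hs ⟨hs1, hs2⟩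
    rcases le_total s x with h | h
    · exact absurd (le_csSup hCbdd ⟨hs, le_trans hpu hs1.le, h⟩) (not_le.2 hs1)
    · exact absurd (csInf_le hDbdd ⟨hs, h, le_trans hs2.le hvq⟩) (not_le.2 hs2)
  have hux0 : μ (Ioc u x) = 0 := by
    have h1 : Ioc u x ⊆ Ioo u v ∪ {v} := by
      intro y ⟨hy1, hy2⟩
      rcases eq_or_lt_of_le (le_trans hy2 hxv) with h | h
      · exact Or.inr h
      · exact Or.inl ⟨hy1, h⟩
    refine le_antisymm ?_ zero_le
    calc μ (Ioc u x) ≤ μ (Ioo u v) + μ {v} := le_trans (measure_mono h1) (measure_union_le _ _)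
      _ = 0 := by rw [hgap, hatom, add_zero]
  have hxv0 : μ (Ioc x v) = 0 := by
    have h1 : Ioc x v ⊆ Ioo u v ∪ {v} := by
      intro y ⟨hy1, hy2⟩
      rcases eq_or_lt_of_le hy2 with h | h
      · exact Or.inr h
      · exact Or.inl ⟨lt_of_le_of_lt hux hy1, h⟩
    refine le_antisymm ?_ zero_le
    calc μ (Ioc x v) ≤ μ (Ioo u v) + μ {v} := le_trans (measure_mono h1) (measure_union_le _ _)
      _ = 0 := by rw [hgap, hatom, add_zero]
  -- combine
  have hsplit1 : μ (Ioc p x) = ENNReal.ofReal (u - p) := by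
    rw [← Ioc_union_Ioc_eq_Ioc hpu hux,
      measure_union (Set.Ioc_disjoint_Ioc_of_le le_rfl) measurableSet_Ioc, hIocpu, hux0, add_zero]
  have hsplit2 : μ (Ioc p q) = ENNReal.ofReal (u - p) + ENNReal.ofReal (q - v) := by
    rw [← Ioc_union_Ioc_eq_Ioc (le_trans hpx hxv) hvq,
      measure_union (Set.Ioc_disjoint_Ioc_of_le le_rfl) measurableSet_Ioc, hIocvq,
      ← Ioc_union_Ioc_eq_Ioc hpx hxv,
      measure_union (Set.Ioc_disjoint_Ioc_of_le le_rfl) measurableSet_Ioc, hxv0, add_zero, hsplit1]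
  have huv : u = v := by
    have h1 : μ (Ioc p q) = ENNReal.ofReal (q - p) := hval p hp q hq (le_trans hpx hxq)
    rw [hsplit2, ← ENNReal.ofReal_add (by linarith) (by linarith)] at h1
    have := (ENNReal.ofReal_eq_ofReal_iff (by linarith) (by linarith)).1 h1
    linarith
  have hux' : u = x := le_antisymm hux (huv ▸ hxv)
  rw [hsplit1, hux']

private lemma ward_aux_restrict (μ : Measure ℝ) (A : Set ℝ)
    (hA0 : A ⊆ Set.Ioi 0)
    (hatom : ∀ x : ℝ, μ {x} = 0)
    (hout : ∀ u v : ℝ, 0 < u → (∀ a ∈ A, a ∉ Set.Ioo u v) → μ (Set.Ioo u v) = 0)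
    (hval : ∀ p ∈ A, ∀ q ∈ A, p ≤ q → μ (Set.Ioc p q) = ENNReal.ofReal (q - p)) :
    μ.restrict {t : ℝ | ∃ p ∈ A, ∃ q ∈ A, p < t ∧ t < q}
      = volume.restrict {t : ℝ | ∃ p ∈ A, ∃ q ∈ A, p < t ∧ t < q} := by
  set J := {t : ℝ | ∃ p ∈ A, ∃ q ∈ A, p < t ∧ t < q} with hJ
  have hJoc : J.OrdConnected := by
    constructor
    rintro x ⟨p, hp, q, hq, hpx, hxq⟩ y ⟨p', hp', q', hq', hpy, hyq⟩ z hz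
    exact ⟨p, hp, q', hq', lt_of_lt_of_le hpx hz.1, lt_of_le_of_lt hz.2 hyq⟩
  -- step 1: Ioc with endpoints in the closed hull
  have K3 : ∀ u v : ℝ, (∃ p ∈ A, p ≤ u) → (∃ q ∈ A, v ≤ q) → u ≤ v →
      μ (Set.Ioc u v) = ENNReal.ofReal (v - u) := by
    rintro u v ⟨p, hp, hpu⟩ ⟨q, hq, hvq⟩ huv
    have h1 := ward_aux_Ioc μ A hA0 hatom hout hval p hp q hq v (hpu.trans huv) hvq
    have h2 := ward_aux_Ioc μ A hA0 hatom hout hval p hp q hq u hpu (huv.trans hvq)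
    have hsplit : μ (Ioc p v) = μ (Ioc p u) + μ (Ioc u v) := by
      rw [← Ioc_union_Ioc_eq_Ioc hpu huv,
        measure_union (Set.Ioc_disjoint_Ioc_of_le le_rfl) measurableSet_Ioc]
    rw [h1, h2, show ENNReal.ofReal (v - p)
        = ENNReal.ofReal (u - p) + ENNReal.ofReal (v - u) by
      rw [← ENNReal.ofReal_add (by linarith) (by linarith)]; ring_nf] at hsplit
    exact ((ENNReal.add_right_inj ENNReal.ofReal_ne_top).1 hsplit).symm
  -- step 2: open intervals inside the hull
  have K4 : ∀ a b : ℝ,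
      (∀ y ∈ Set.Ioo a b, (∃ p ∈ A, p ≤ y) ∧ (∃ q ∈ A, y ≤ q)) →
      μ (Set.Ioo a b) = ENNReal.ofReal (b - a) := by
    intro a b hH
    rcases le_or_gt b a with hba | hab
    · rw [Ioo_eq_empty (by exact not_lt.mpr hba), measure_empty,
        ENNReal.ofReal_eq_zero.2 (by linarith)]
    · set w := b - a with hw
      have hw0 : 0 < w := by simp [hw]; linarith
      set u : ℕ → ℝ := fun n => a + w / (n + 3) with hu
      set v : ℕ → ℝ := fun n => b - w / (n + 3) with hv
      have hd0 : ∀ n : ℕ, 0 < w / ((n : ℝ) + 3) := fun n =>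
        div_pos hw0 (by positivity)
      have hd3 : ∀ n : ℕ, w / ((n : ℝ) + 3) ≤ w / 3 := by
        intro n
        have hn : (0:ℝ) ≤ n := Nat.cast_nonneg n
        exact div_le_div_of_nonneg_left hw0.le (by norm_num) (by linarith)
      have hmemu : ∀ n, u n ∈ Ioo a b := by
        intro n
        constructor
        · simp [hu]; exact hd0 n
        · have := hd3 n; simp only [hu]; linarith
      have hmemv : ∀ n, v n ∈ Ioo a b := by
        intro n
        constructor
        · have := hd3 n; simp only [hv]; linarith
        · simp only [hv]; linarith [hd0 n]
      have huv : ∀ n, u n ≤ v n := by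
        intro n; have := hd3 n; simp only [hu, hv]; linarith
      have hdtend : Filter.Tendsto (fun n : ℕ => w / ((n : ℝ) + 3)) Filter.atTop (nhds 0) := by
        apply Filter.Tendsto.div_atTop tendsto_const_nhds
        exact Filter.tendsto_atTop_add_const_right _ 3 tendsto_natCast_atTop_atTop
      have hutend : Filter.Tendsto u Filter.atTop (nhds a) := by
        simpa using tendsto_const_nhds.add hdtend
      have hvtend : Filter.Tendsto v Filter.atTop (nhds b) := by
        simpa using tendsto_const_nhds.sub hdtend
      have hdanti : ∀ m n : ℕ, m ≤ n → w / ((n : ℝ) + 3) ≤ w / ((m : ℝ) + 3) := by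
        intro m n hmn
        apply div_le_div_of_nonneg_left hw0.le (by positivity)
        have : (m : ℝ) ≤ n := Nat.cast_le.2 hmn
        linarith
      have hmono : Monotone fun n => Ioc (u n) (v n) := by
        intro m n hmn
        apply Ioc_subset_Ioc
        · simp only [hu]; linarith [hdanti m n hmn]
        · simp only [hv]; linarith [hdanti m n hmn]
      have hUnion : (⋃ n, Ioc (u n) (v n)) = Ioo a b := by
        apply subset_antisymm
        · refine iUnion_subset fun n y hy => ?_
          exact ⟨lt_of_lt_of_le (hmemu n).1 hy.1.le, lt_of_le_of_lt hy.2 (hmemv n).2⟩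
        · intro y hy
          have h1 := (tendsto_order.1 hutend).2 y hy.1
          have h2 := (tendsto_order.1 hvtend).1 y hy.2
          obtain ⟨n, hn1, hn2⟩ := (h1.and h2).exists
          exact mem_iUnion.2 ⟨n, hn1, hn2.le⟩
      have hvals : ∀ n, μ (Ioc (u n) (v n)) = ENNReal.ofReal (v n - u n) := fun n =>
        K3 (u n) (v n) (hH (u n) (hmemu n)).1 (hH (v n) (hmemv n)).2 (huv n)
      rw [← hUnion, Directed.measure_iUnion hmono.directed_le]
      apply le_antisymm
      · apply iSup_le
        intro n
        rw [hvals n]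
        exact ENNReal.ofReal_le_ofReal (by linarith [(hmemu n).1, (hmemv n).2])
      · have htend : Filter.Tendsto (fun n => ENNReal.ofReal (v n - u n)) Filter.atTop
            (nhds (ENNReal.ofReal (b - a))) := ENNReal.tendsto_ofReal (hvtend.sub hutend)
        refine le_of_tendsto' htend fun n => ?_
        rw [← hvals n]
        exact le_iSup (fun n => μ (Ioc (u n) (v n))) n
  -- step 3: extensionality via Ioc values
  have hcomp : ∀ a b : ℝ, μ (Ioc a b ∩ J) = volume (Ioc a b ∩ J)
      ∧ μ (Ioc a b ∩ J) ≠ ⊤ := by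
    intro a b
    set S := Ioc a b ∩ J with hS
    rcases S.eq_empty_or_nonempty with hne | hne
    · rw [hne]; simp
    · have hbddA : BddAbove S := ⟨b, fun y hy => hy.1.2⟩
      have hbddB : BddBelow S := ⟨a, fun y hy => hy.1.1.le⟩
      set a' := sInf S with ha'
      set b' := sSup S with hb'
      have hSoc : S.OrdConnected := Set.ordConnected_Ioc.inter hJoc
      have hIoo : Ioo a' b' ⊆ S := by
        intro y hy
        obtain ⟨s1, hs1, hs1y⟩ := exists_lt_of_csInf_lt hne hy.1
        obtain ⟨s2, hs2, hys2⟩ := exists_lt_of_lt_csSup hne hy.2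
        exact hSoc.out hs1 hs2 ⟨hs1y.le, hys2.le⟩
      have hsub : S ⊆ Icc a' b' := fun y hy => ⟨csInf_le hbddB hy, le_csSup hbddA hy⟩
      have key : ∀ ν : Measure ℝ, ν {a'} = 0 → ν {b'} = 0 → ν S = ν (Ioo a' b') := by
        intro ν h1 h2
        refine le_antisymm ?_ (measure_mono hIoo)
        have hsub2 : S ⊆ {a'} ∪ (Ioo a' b' ∪ {b'}) := by
          intro y hy
          rcases eq_or_lt_of_le (hsub hy).1 with h | h
          · exact Or.inl (mem_singleton_iff.2 h.symm)
          · rcases eq_or_lt_of_le (hsub hy).2 with h' | h'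
            · exact Or.inr (Or.inr (mem_singleton_iff.2 h'))
            · exact Or.inr (Or.inl ⟨h, h'⟩)
        refine le_trans (measure_mono hsub2) ?_
        refine le_trans (measure_union_le _ _) ?_
        refine le_trans (add_le_add le_rfl (measure_union_le _ _)) ?_
        rw [h1, h2, zero_add, add_zero]
      have hμS : μ S = ENNReal.ofReal (b' - a') := by
        rw [key μ (hatom a') (hatom b')]
        apply K4
        intro y hy
        obtain ⟨p, hp, q, hq, hpy, hyq⟩ := (hIoo hy).2
        exact ⟨⟨p, hp, hpy.le⟩, ⟨q, hq, hyq.le⟩⟩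
      have hvS : volume S = ENNReal.ofReal (b' - a') := by
        rw [key volume (measure_singleton _) (measure_singleton _), Real.volume_Ioo]
      exact ⟨by rw [hμS, hvS], by rw [hμS]; exact ENNReal.ofReal_ne_top⟩
  apply MeasureTheory.Measure.ext_of_Ioc'
  · intro a b _
    rw [Measure.restrict_apply measurableSet_Ioc]
    exact (hcomp a b).2
  · intro a b _
    rw [Measure.restrict_apply measurableSet_Ioc, Measure.restrict_apply measurableSet_Ioc]
    exact (hcomp a b).1

/-- If a nonnegative Borel `f` on `(0,∞)` satisfies, for some constant `c` and a.e. `t`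
    with `f(t) ≠ 0`, the identity `∫₀^t f(s) s^{-(α+1)} Γ(α+1) ds = t + c`, then
    `f(t) = Γ(α+1)⁻¹ t^{α+1} 1_E(t)` a.e. for some measurable `E ⊆ (0,∞)` which is
    connected (an interval) up to null sets. -/
theorem ward_functional_equation_solution (α : ℝ) (hα : -1 < α) (f : ℝ → ℝ)
    (hf : Measurable f) (hpos : ∀ t, 0 ≤ f t)
    (hfe : ∃ c : ℝ, ∀ᵐ t ∂(volume.restrict (Set.Ioi (0 : ℝ))), f t ≠ 0 →
      (∫ s in Set.Ioc (0 : ℝ) t, f s * s ^ (-(α + 1)) * Real.Gamma (α + 1)) = t + c) :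
    ∃ E : Set ℝ, MeasurableSet E ∧ E ⊆ Set.Ioi 0 ∧
      (∀ᵐ t ∂(volume.restrict (Set.Ioi (0 : ℝ))),
        f t = (Real.Gamma (α + 1))⁻¹ * t ^ (α + 1) * E.indicator (fun _ => (1 : ℝ)) t) ∧
      ∃ I : Set ℝ, I.OrdConnected ∧ volume (symmDiff E I) = 0 := by
  obtain ⟨c, hc⟩ := hfe
  have hΓpos : 0 < Real.Gamma (α + 1) := Real.Gamma_pos_of_pos (by linarith)
  set g : ℝ → ℝ := fun s => f s * s ^ (-(α + 1)) * Real.Gamma (α + 1) with hg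
  have hgmeas : Measurable g := by
    apply Measurable.mul_const
    apply hf.mul
    measurability
  have hgnn : ∀ s : ℝ, 0 < s → 0 ≤ g s := fun s hs =>
    mul_nonneg (mul_nonneg (hpos s) (Real.rpow_nonneg hs.le _)) hΓpos.le
  set g' : ℝ → ENNReal := fun s => ENNReal.ofReal (g s) with hg'
  have hg'meas : Measurable g' := ENNReal.measurable_ofReal.comp hgmeas
  set μ : Measure ℝ := volume.withDensity g' with hμ
  set A : Set ℝ := {t | 0 < t ∧ f t ≠ 0 ∧ (∫ s in Set.Ioc (0:ℝ) t, g s) = t + c} with hA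
  have hA0 : A ⊆ Set.Ioi 0 := fun t ht => ht.1
  have hae : ∀ᵐ t ∂(volume.restrict (Set.Ioi (0:ℝ))), f t ≠ 0 → t ∈ A := by
    filter_upwards [hc, ae_restrict_mem measurableSet_Ioi] with t h1 h2 hft
    exact ⟨h2, hft, h1 hft⟩
  have hatom : ∀ x : ℝ, μ {x} = 0 := by
    intro x
    rw [hμ, withDensity_apply _ (measurableSet_singleton x),
      Measure.restrict_eq_zero.2 (measure_singleton x), lintegral_zero_measure]
  have hout : ∀ S : Set ℝ, MeasurableSet S → S ⊆ Set.Ioi 0 → (∀ a ∈ A, a ∉ S) → μ S = 0 := by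
    intro S hSm hS0 hSA
    rw [hμ, withDensity_apply _ hSm]
    rw [show (∫⁻ a in S, g' a) = ∫⁻ a, g' a ∂(volume.restrict S) from rfl,
      lintegral_eq_zero_iff hg'meas]
    have h1 : ∀ᵐ t ∂(volume.restrict S), f t ≠ 0 → t ∈ A :=
      ae_restrict_of_ae_restrict_of_subset hS0 hae
    filter_upwards [h1, ae_restrict_mem hSm] with t h2 h3
    by_cases h0 : f t = 0
    · simp [hg', hg, h0]
    · exact absurd h3 (hSA t (h2 h0))
  have hFnn : ∀ t ∈ A, 0 ≤ t + c := by
    intro t ht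
    rw [← ht.2.2]
    exact setIntegral_nonneg measurableSet_Ioc fun s hs => hgnn s hs.1
  have hBval : ∀ t ∈ A, IntegrableOn g (Set.Ioc 0 t) volume →
      μ (Set.Ioc 0 t) = ENNReal.ofReal (t + c) := by
    intro t ht hint
    have hnn : 0 ≤ᵐ[volume.restrict (Set.Ioc (0:ℝ) t)] g :=
      (ae_restrict_mem measurableSet_Ioc).mono fun s hs => hgnn s hs.1
    rw [hμ, withDensity_apply _ measurableSet_Ioc]
    rw [show (∫⁻ a in Set.Ioc (0:ℝ) t, g' a) = ∫⁻ a in Set.Ioc (0:ℝ) t, ENNReal.ofReal (g a)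
      from rfl]
    rw [← ofReal_integral_eq_lintegral_ofReal hint hnn, ht.2.2]
  by_cases hcase : ∀ t ∈ A, t = -c
  · refine ⟨∅, MeasurableSet.empty, empty_subset _, ?_, ∅, Set.ordConnected_empty, by simp⟩
    have hnc : ∀ᵐ t ∂(volume.restrict (Set.Ioi (0:ℝ))), t ≠ -c := by
      refine ae_restrict_of_ae ?_
      rw [ae_iff]
      simp only [not_not]
      have he : {a : ℝ | a = -c} = {-c} := by ext y; simp
      rw [he]
      exact measure_singleton _
    filter_upwards [hae, hnc] with t h1 h2
    rw [Set.indicator_of_notMem (Set.notMem_empty t), mul_zero]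
    by_contra hft
    exact h2 (hcase t (h1 hft))
  · push_neg at hcase
    obtain ⟨a₀, ha₀A, ha₀ne⟩ := hcase
    have hAnotint : ∀ t ∈ A, ¬ IntegrableOn g (Set.Ioc 0 t) volume → t = -c := by
      intro t ht hni
      have h2 := ht.2.2
      rw [MeasureTheory.integral_undef hni] at h2
      linarith
    have hint : ∀ t ∈ A, IntegrableOn g (Set.Ioc 0 t) volume := by
      intro t htA
      by_contra hni
      have htc : t = -c := hAnotint t htA hni
      set B : Set ℝ := {b | b ∈ A ∧ IntegrableOn g (Set.Ioc 0 b) volume} with hB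
      have ha₀B : a₀ ∈ B := ⟨ha₀A, by
        by_contra hni'
        exact ha₀ne (hAnotint a₀ ha₀A hni')⟩
      have hBlt : ∀ b ∈ B, b < t := by
        intro b hb
        by_contra hle
        push_neg at hle
        exact hni (hb.2.mono_set (Set.Ioc_subset_Ioc le_rfl hle))
      have hBbdd : BddAbove B := ⟨t, fun b hb => (hBlt b hb).le⟩
      have hBne : B.Nonempty := ⟨a₀, ha₀B⟩
      set σ := sSup B with hσ
      have hσpos : 0 < σ := lt_of_lt_of_le ha₀A.1 (le_csSup hBbdd ha₀B)
      have hσt : σ ≤ t := csSup_le hBne fun b hb => (hBlt b hb).le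
      obtain ⟨b, hbmono, hbtend, hbmem⟩ := exists_seq_tendsto_sSup hBne hBbdd
      rw [← hσ] at hbtend
      have hgapμ : μ (Set.Ioo σ t) = 0 := by
        apply hout _ measurableSet_Ioo (fun y hy => lt_trans hσpos hy.1)
        intro s hsA hsmem
        by_cases hsint : IntegrableOn g (Set.Ioc 0 s) volume
        · exact absurd (le_csSup hBbdd ⟨hsA, hsint⟩) (not_le.2 hsmem.1)
        · exact absurd (hAnotint s hsA hsint ▸ hsmem.2) (by rw [← htc]; exact lt_irrefl t)
      have hsupb : μ (Set.Ioc 0 σ) ≤ ENNReal.ofReal (σ + c) := by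
        have hsub : Set.Ioc 0 σ ⊆ {σ} ∪ ⋃ n, Set.Ioc 0 (b n) := by
          intro y hy
          rcases eq_or_lt_of_le hy.2 with h | h
          · exact Or.inl (mem_singleton_iff.2 h)
          · obtain ⟨n, hn⟩ := ((tendsto_order.1 hbtend).1 y h).exists
            exact Or.inr (mem_iUnion.2 ⟨n, hy.1, hn.le⟩)
        refine le_trans (measure_mono hsub) (le_trans (measure_union_le _ _) ?_)
        rw [hatom σ, zero_add,
          Directed.measure_iUnion ((show Monotone fun n => Set.Ioc (0:ℝ) (b n) from
            fun m n hmn => Set.Ioc_subset_Ioc le_rfl (hbmono hmn)).directed_le)]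
        apply iSup_le; intro n
        rw [hBval (b n) (hbmem n).1 (hbmem n).2]
        exact ENNReal.ofReal_le_ofReal (by linarith [le_csSup hBbdd (hbmem n)])
      have hfin : μ (Set.Ioc 0 t) ≠ ⊤ := by
        have hsub : Set.Ioc 0 t ⊆ Set.Ioc 0 σ ∪ (Set.Ioo σ t ∪ {t}) := by
          intro y hy
          rcases le_or_gt y σ with h | h
          · exact Or.inl ⟨hy.1, h⟩
          · rcases eq_or_lt_of_le hy.2 with h' | h'
            · exact Or.inr (Or.inr (mem_singleton_iff.2 h'))
            · exact Or.inr (Or.inl ⟨h, h'⟩)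
        have hle : μ (Set.Ioc 0 t) ≤ ENNReal.ofReal (σ + c) := by
          refine le_trans (measure_mono hsub) (le_trans (measure_union_le _ _) ?_)
          have h2 : μ (Set.Ioo σ t ∪ {t}) ≤ 0 := by
            refine le_trans (measure_union_le _ _) ?_
            rw [hgapμ, hatom t, add_zero]
          rw [le_antisymm h2 zero_le, add_zero]
          exact hsupb
        exact ne_top_of_le_ne_top ENNReal.ofReal_ne_top hle
      apply hni
      constructor
      · exact hgmeas.aestronglyMeasurable
      · rw [hasFiniteIntegral_iff_ofReal
          ((ae_restrict_mem measurableSet_Ioc).mono fun s hs => hgnn s hs.1)]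
        rw [show (∫⁻ a in Set.Ioc (0:ℝ) t, ENNReal.ofReal (g a)) = ∫⁻ a in Set.Ioc (0:ℝ) t, g' a
          from rfl, ← withDensity_apply _ measurableSet_Ioc, ← hμ]
        exact lt_top_iff_ne_top.2 hfin
    have hK0 : ∀ t ∈ A, μ (Set.Ioc 0 t) = ENNReal.ofReal (t + c) := fun t ht =>
      hBval t ht (hint t ht)
    have hval : ∀ p ∈ A, ∀ q ∈ A, p ≤ q → μ (Set.Ioc p q) = ENNReal.ofReal (q - p) := by
      intro p hp q hq hpq
      have hsplit : μ (Set.Ioc 0 q) = μ (Set.Ioc 0 p) + μ (Set.Ioc p q) := by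
        rw [← Set.Ioc_union_Ioc_eq_Ioc hp.1.le hpq,
          measure_union (Set.Ioc_disjoint_Ioc_of_le le_rfl) measurableSet_Ioc]
      rw [hK0 q hq, hK0 p hp, show ENNReal.ofReal (q + c)
          = ENNReal.ofReal (p + c) + ENNReal.ofReal (q - p) by
        rw [← ENNReal.ofReal_add (hFnn p hp) (by linarith)]; ring_nf] at hsplit
      exact ((ENNReal.add_right_inj ENNReal.ofReal_ne_top).1 hsplit).symm
    have hout' : ∀ u v : ℝ, 0 < u → (∀ a ∈ A, a ∉ Set.Ioo u v) → μ (Set.Ioo u v) = 0 :=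
      fun u v hu hav => hout _ measurableSet_Ioo (fun y hy => lt_trans hu hy.1) hav
    have hres := ward_aux_restrict μ A hA0 hatom hout' hval
    set J := {t : ℝ | ∃ p ∈ A, ∃ q ∈ A, p < t ∧ t < q} with hJdef
    have hJopen : IsOpen J := by
      have hJu : J = ⋃ p ∈ A, ⋃ q ∈ A, Set.Ioo p q := by
        ext t
        simp only [hJdef, mem_setOf_eq, mem_iUnion, mem_Ioo, exists_prop]
      rw [hJu]
      exact isOpen_biUnion fun _ _ => isOpen_biUnion fun _ _ => isOpen_Ioo
    have hJmeas : MeasurableSet J := hJopen.measurableSet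
    have hJ0 : J ⊆ Set.Ioi 0 := by
      rintro t ⟨p, hp, q, hq, hpt, htq⟩
      exact lt_trans hp.1 hpt
    have hJoc : J.OrdConnected := by
      constructor
      rintro x ⟨p, hp, q, hq, h1, h2⟩ y ⟨p', hp', q', hq', h3, h4⟩ z hz
      exact ⟨p, hp, q', hq', lt_of_lt_of_le h1 hz.1, lt_of_le_of_lt hz.2 h4⟩
    have hg1 : ∀ᵐ t ∂(volume.restrict J), g' t = 1 := by
      have h1 : (volume.restrict J).withDensity g' = (volume.restrict J).withDensity 1 := by
        rw [withDensity_one, ← restrict_withDensity hJmeas, ← hμ, hres]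
      have h2 := (withDensity_eq_iff_of_sigmaFinite hg'meas.aemeasurable
        aemeasurable_one).1 h1
      exact h2.mono fun t ht => by simpa using ht
    have hg1' : ∀ᵐ t ∂(volume.restrict (Set.Ioi (0:ℝ))), t ∈ J → g t = 1 := by
      have h2 : ∀ᵐ t ∂(volume : Measure ℝ), t ∈ J → g' t = 1 := (ae_restrict_iff' hJmeas).1 hg1
      refine ae_restrict_of_ae (h2.mono ?_)
      intro t ht htJ
      have h3 := ht htJ
      have hnn := hgnn t (hJ0 htJ)
      have h4 := congrArg ENNReal.toReal h3
      rw [show g' t = ENNReal.ofReal (g t) from rfl, ENNReal.toReal_ofReal hnn] at h4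
      simpa using h4
    have hAJ : volume (A \ J) = 0 := by
      have hsub : A \ J ⊆ {x | IsLeast A x} ∪ {x | IsGreatest A x} := by
        rintro t ⟨htA, htJ⟩
        by_cases hl : ∃ p ∈ A, p < t
        · by_cases hr : ∃ q ∈ A, t < q
          · obtain ⟨p, hp, hpt⟩ := hl
            obtain ⟨q, hq, htq⟩ := hr
            exact absurd ⟨p, hp, q, hq, hpt, htq⟩ htJ
          · push_neg at hr
            exact Or.inr ⟨htA, fun y hy => hr y hy⟩
        · push_neg at hl
          exact Or.inl ⟨htA, fun y hy => hl y hy⟩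
      refine measure_mono_null hsub ?_
      refine le_antisymm (le_trans (measure_union_le _ _) ?_) zero_le
      rw [Set.Subsingleton.measure_zero (fun x hx y hy => hx.unique hy) volume,
        Set.Subsingleton.measure_zero (fun x hx y hy => hx.unique hy) volume, add_zero]
    have hAJ' : ∀ᵐ t ∂(volume.restrict (Set.Ioi (0:ℝ))), t ∉ A \ J :=
      ae_restrict_of_ae (measure_eq_zero_iff_ae_notMem.1 hAJ)
    refine ⟨J, hJmeas, hJ0, ?_, J, hJoc, by simp⟩
    filter_upwards [hae, hg1', hAJ', ae_restrict_mem measurableSet_Ioi] with t h1 h2 h3 h4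
    by_cases htJ : t ∈ J
    · rw [Set.indicator_of_mem htJ]
      have hgt1 : f t * t ^ (-(α + 1)) * Real.Gamma (α + 1) = 1 := h2 htJ
      have ht0 : (0:ℝ) < t := h4
      have hprod : t ^ (-(α+1)) * t ^ (α+1) = 1 := by
        rw [← Real.rpow_add ht0, show -(α+1) + (α+1) = 0 by ring, Real.rpow_zero]
      have hΓ : Real.Gamma (α+1) ≠ 0 := ne_of_gt hΓpos
      calc f t = f t * (t ^ (-(α+1)) * t ^ (α+1)) * (Real.Gamma (α+1) * (Real.Gamma (α+1))⁻¹) := by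
            rw [hprod, mul_inv_cancel₀ hΓ, mul_one, mul_one]
        _ = (f t * t ^ (-(α+1)) * Real.Gamma (α+1)) * (t ^ (α+1) * (Real.Gamma (α+1))⁻¹) := by
            ring
        _ = (Real.Gamma (α+1))⁻¹ * t ^ (α+1) * (fun _ => (1:ℝ)) t := by
            rw [hgt1]; simp; ring
    · rw [Set.indicator_of_notMem htJ, mul_zero]
      by_contra hft
      exact h3 ⟨h1 hft, htJ⟩
end
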